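/- Let (Ω, P) be a probability space, H a separable Hilbert space, and X_1, ..., X_n i.i.d. H-valued random variables with ||X_j|| ≤ K almost surely. Then for every ε > 0, the probability that ||(1/n) Σ_{j=1}^n X_j - E[X_1]|| > ε is at most 2 * exp(-n ε^2 / (2 K^2)). -/

import Mathlib

open Real MeasureTheory ProbabilityTheory

local notation "⟪" x ", " y "⟫" => @inner ℝ _ _ x y

lemma hoeff_kernel (p : ℝ) (hp0 : 0 ≤ p) (hp1 : p ≤ 1) (l : ℝ) :
    p * exp l + (1 - p) * exp (-l) ≤ exp ((2*p - 1) * l + l^2 / 2) := by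
  set q : ℝ := 1 - p with hq
  have hq0 : 0 ≤ q := by simp [hq]; linarith
  set D : ℝ → ℝ := fun l => p * exp l + q * exp (-l) with hD
  set N : ℝ → ℝ := fun l => p * exp l - q * exp (-l) with hN
  have hDpos : ∀ l, 0 < D l := by
    intro l
    rcases lt_or_eq_of_le hp0 with h | h
    · have := exp_pos l; have h2 : 0 ≤ q * exp (-l) := by positivity
      simp only [hD]; nlinarith
    · have hq1 : q = 1 := by simp [hq, ← h]
      simp [hD, ← h, hq1]; positivity
  have hDN : ∀ l, HasDerivAt D (N l) l := by
    intro l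
    have h1 : HasDerivAt (fun l : ℝ => exp l) (exp l) l := Real.hasDerivAt_exp l
    have h2 : HasDerivAt (fun l : ℝ => exp (-l)) (-exp (-l)) l := by
      simpa [Function.comp_def] using (Real.hasDerivAt_exp (-l)).comp l (hasDerivAt_neg l)
    exact ((h1.const_mul p).add (h2.const_mul q)).congr_deriv
      (by show _ = p * exp l - q * exp (-l); ring)
  have hND : ∀ l, HasDerivAt N (D l) l := by
    intro l
    have h1 : HasDerivAt (fun l : ℝ => exp l) (exp l) l := Real.hasDerivAt_exp l
    have h2 : HasDerivAt (fun l : ℝ => exp (-l)) (-exp (-l)) l := by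
      simpa [Function.comp_def] using (Real.hasDerivAt_exp (-l)).comp l (hasDerivAt_neg l)
    exact ((h1.const_mul p).sub (h2.const_mul q)).congr_deriv
      (by show _ = p * exp l + q * exp (-l); ring)
  set g : ℝ → ℝ := fun l => (2*p - 1) + l - N l / D l with hg
  have hgd : ∀ l, HasDerivAt g (1 - 4*p*q/(D l)^2) l := by
    intro l
    have hdiv : HasDerivAt (fun l => N l / D l) ((D l * D l - N l * N l) / (D l)^2) l :=
      (hND l).div (hDN l) (hDpos l).ne'
    have h4 : D l * D l - N l * N l = 4 * p * q := by
      have hexp : exp l * exp (-l) = 1 := by rw [← exp_add]; simp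
      simp only [hD, hN]; nlinarith [hexp]
    have := ((hasDerivAt_id l).const_add (2*p-1)).sub hdiv
    rw [h4] at this
    exact this
  have hg_deriv_nonneg : ∀ l, 0 ≤ 1 - 4*p*q/(D l)^2 := by
    intro l
    have h1 : 4 * p * q ≤ (D l)^2 := by
      have hexp : exp l * exp (-l) = 1 := by rw [← exp_add]; simp
      have := sq_nonneg (p * exp l - q * exp (-l))
      simp only [hD]; nlinarith [hexp]
    have h2 : (0:ℝ) < (D l)^2 := pow_pos (hDpos l) 2
    rw [sub_nonneg, div_le_one h2]; exact h1
  have hgmono : Monotone g :=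
    monotone_of_deriv_nonneg (fun x => (hgd x).differentiableAt)
      (fun x => by rw [(hgd x).deriv]; exact hg_deriv_nonneg x)
  have hg0 : g 0 = 0 := by
    simp only [hg, hN, hD]
    rw [exp_zero]
    simp only [neg_zero, exp_zero, mul_one]
    have : p + q = 1 := by simp [hq]
    rw [this, div_one, hq]; ring
  -- now f
  set f : ℝ → ℝ := fun l => (2*p - 1) * l + l^2/2 - Real.log (D l) with hf
  have hfd : ∀ l, HasDerivAt f (g l) l := by
    intro l
    have hlog : HasDerivAt (fun l => Real.log (D l)) (N l / D l) l :=
      (hDN l).log (hDpos l).ne'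
    have h1 : HasDerivAt (fun l : ℝ => (2*p-1) * l + l^2/2) ((2*p-1) + l) l := by
      have ha : HasDerivAt (fun l : ℝ => (2*p-1) * l) (2*p-1) l := by
        simpa using (hasDerivAt_id l).const_mul (2*p-1)
      have hb : HasDerivAt (fun l : ℝ => l^2/2) l l := by
        simpa using (hasDerivAt_pow 2 l).div_const 2
      exact ha.add hb
    exact h1.sub hlog
  have hfdiff : Differentiable ℝ f := fun x => (hfd x).differentiableAt
  have hf0 : f 0 = 0 := by
    simp only [hf, hD]
    have : p + q = 1 := by rw [hq]; ring
    norm_num [this]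
  have hfnonneg : ∀ l, 0 ≤ f l := by
    intro l
    rcases le_or_gt 0 l with h | h
    · have hmono : MonotoneOn f (Set.Ici 0) := by
        apply monotoneOn_of_deriv_nonneg (convex_Ici 0) hfdiff.continuous.continuousOn
          hfdiff.differentiableOn
        intro x hx
        rw [interior_Ici] at hx
        rw [(hfd x).deriv]
        have := hgmono (le_of_lt hx)
        rw [hg0] at this
        exact this
      have := hmono (Set.self_mem_Ici) (Set.mem_Ici.mpr h) h
      rwa [hf0] at this
    · have hanti : AntitoneOn f (Set.Iic 0) := by
        apply antitoneOn_of_deriv_nonpos (convex_Iic 0) hfdiff.continuous.continuousOn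
          hfdiff.differentiableOn
        intro x hx
        rw [interior_Iic] at hx
        rw [(hfd x).deriv]
        have := hgmono (le_of_lt hx)
        rw [hg0] at this
        exact this
      have := hanti (Set.mem_Iic.mpr h.le) (Set.self_mem_Iic) h.le
      rwa [hf0] at this
  have hl := hfnonneg l
  have hlog_le : Real.log (D l) ≤ (2*p - 1) * l + l^2/2 := by
    simp only [hf] at hl; linarith
  calc p * exp l + (1 - p) * exp (-l) = D l := by rw [hD, hq]
    _ ≤ exp ((2*p - 1) * l + l^2 / 2) := by
        rw [← Real.exp_log (hDpos l)]
        exact Real.exp_le_exp.mpr hlog_le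

lemma hasSum_cosh_sqrt {u : ℝ} (hu : 0 ≤ u) :
    HasSum (fun n : ℕ => u ^ n / ((2 * n).factorial : ℝ)) (Real.cosh (Real.sqrt u)) := by
  have h := Real.hasSum_cosh (Real.sqrt u)
  convert h using 2 with n
  rw [pow_mul, Real.sq_sqrt hu]

lemma cosh_sqrt_le_combo {w1 w2 u1 u2 u : ℝ} (hw1 : 0 ≤ w1) (hw2 : 0 ≤ w2)
    (hw : w1 + w2 = 1) (hu1 : 0 ≤ u1) (hu2 : 0 ≤ u2) (hu0 : 0 ≤ u)
    (hu : u ≤ w1 * u1 + w2 * u2) :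
    Real.cosh (Real.sqrt u) ≤ w1 * Real.cosh (Real.sqrt u1) + w2 * Real.cosh (Real.sqrt u2) := by
  have h1 := hasSum_cosh_sqrt hu1
  have h2 := hasSum_cosh_sqrt hu2
  have h0 := hasSum_cosh_sqrt hu0
  have hrhs : HasSum (fun n : ℕ => w1 * (u1 ^ n / ((2*n).factorial : ℝ))
      + w2 * (u2 ^ n / ((2*n).factorial : ℝ)))
      (w1 * Real.cosh (Real.sqrt u1) + w2 * Real.cosh (Real.sqrt u2)) :=
    (h1.mul_left w1).add (h2.mul_left w2)
  refine hasSum_le (fun n => ?_) h0 hrhs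
  have hfac : (0:ℝ) < ((2*n).factorial : ℝ) := by positivity
  have key : u ^ n ≤ w1 * u1 ^ n + w2 * u2 ^ n := by
    have ha : u ^ n ≤ (w1 * u1 + w2 * u2) ^ n := pow_le_pow_left₀ hu0 hu n
    have hb := (convexOn_pow n).2 (Set.mem_Ici.mpr hu1) (Set.mem_Ici.mpr hu2) hw1 hw2 hw
    simp only [smul_eq_mul] at hb
    exact ha.trans hb
  rw [mul_div_assoc'] at *
  rw [mul_div_assoc', ← add_div, div_le_div_iff_of_pos_right hfac]
  exact key

lemma chord_bound {K lam a t r : ℝ} (hK : 0 < K) (hl : 0 ≤ lam) (ha : 0 ≤ a)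
    (ht : |t| ≤ K) (hr : 0 ≤ r) (hr2 : r^2 ≤ a^2 + K^2 + 2*a*t) :
    Real.cosh (lam * r) ≤
      ((K - t) * Real.cosh (lam*(a - K)) + (K + t) * Real.cosh (lam*(a + K))) / (2*K) := by
  have htK := abs_le.mp ht
  have hw1 : (0:ℝ) ≤ (K - t)/(2*K) := by
    apply div_nonneg <;> linarith
  have hw2 : (0:ℝ) ≤ (K + t)/(2*K) := by
    apply div_nonneg <;> linarith
  have hw : (K - t)/(2*K) + (K + t)/(2*K) = 1 := by field_simp; ring
  have key := cosh_sqrt_le_combo (u1 := (lam*(a-K))^2) (u2 := (lam*(a+K))^2)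
    (u := (lam*r)^2) hw1 hw2 hw (sq_nonneg _) (sq_nonneg _) (sq_nonneg _) ?ineq
  case ineq =>
    have expand : (K - t)/(2*K) * (lam*(a-K))^2 + (K + t)/(2*K) * (lam*(a+K))^2
        = lam^2 * (a^2 + K^2 + 2*a*t) := by
      field_simp; ring
    rw [expand]
    have : (lam*r)^2 = lam^2 * r^2 := by ring
    rw [this]
    have h2 : (0:ℝ) ≤ lam^2 := sq_nonneg _
    exact mul_le_mul_of_nonneg_left hr2 h2
  have e0 : Real.sqrt ((lam*r)^2) = lam * r := Real.sqrt_sq (by positivity)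
  have e1 : Real.cosh (Real.sqrt ((lam*(a-K))^2)) = Real.cosh (lam*(a-K)) := by
    rw [Real.sqrt_sq_eq_abs, Real.cosh_abs]
  have e2 : Real.cosh (Real.sqrt ((lam*(a+K))^2)) = Real.cosh (lam*(a+K)) := by
    rw [Real.sqrt_sq_eq_abs, Real.cosh_abs]
  rw [e0, e1, e2] at key
  calc Real.cosh (lam * r) ≤ _ := key
    _ = ((K - t) * Real.cosh (lam*(a - K)) + (K + t) * Real.cosh (lam*(a + K))) / (2*K) := by
      ring

lemma star_bound {K lam a tau : ℝ} (hK : 0 < K) (hl : 0 ≤ lam) (htau : |tau| ≤ K) :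
    ((K - tau) * Real.cosh (lam*(a - K)) + (K + tau) * Real.cosh (lam*(a + K))) / (2*K)
      ≤ Real.cosh (lam*(a + tau)) * exp (lam^2 * K^2 / 2) := by
  have htK := abs_le.mp htau
  have h2K : (0:ℝ) < 2*K := by linarith
  have hp0 : (0:ℝ) ≤ (K + tau)/(2*K) := by apply div_nonneg <;> linarith
  have hp1 : (K + tau)/(2*K) ≤ 1 := by rw [div_le_one h2K]; linarith
  have hq0 : (0:ℝ) ≤ (K - tau)/(2*K) := by apply div_nonneg <;> linarith
  have hq1 : (K - tau)/(2*K) ≤ 1 := by rw [div_le_one h2K]; linarith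
  have hA := hoeff_kernel ((K + tau)/(2*K)) hp0 hp1 (lam*K)
  have hB := hoeff_kernel ((K - tau)/(2*K)) hq0 hq1 (lam*K)
  have h2p : (2 * ((K + tau)/(2*K)) - 1) * (lam*K) = lam * tau := by field_simp; ring
  have h2q : (2 * ((K - tau)/(2*K)) - 1) * (lam*K) = -(lam * tau) := by field_simp; ring
  have h1p : 1 - (K + tau)/(2*K) = (K - tau)/(2*K) := by field_simp; ring
  have h1q : 1 - (K - tau)/(2*K) = (K + tau)/(2*K) := by field_simp; ring
  rw [h2p, h1p] at hA
  rw [h2q, h1q] at hB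
  have hsq : (lam*K)^2/2 = lam^2*K^2/2 := by ring
  rw [hsq] at hA hB
  rw [div_mul_eq_mul_div, div_mul_eq_mul_div, ← add_div, div_le_iff₀ h2K] at hA hB
  have hexpA : exp (lam*tau + lam^2*K^2/2) = exp (lam*tau) * exp (lam^2*K^2/2) := by
    rw [← exp_add]
  have hexpB : exp (-(lam*tau) + lam^2*K^2/2) = exp (-(lam*tau)) * exp (lam^2*K^2/2) := by
    rw [← exp_add]
  rw [hexpA] at hA
  rw [hexpB] at hB
  rw [Real.cosh_eq, Real.cosh_eq, Real.cosh_eq]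
  have ea : exp (lam*(a-K)) = exp (lam*a) * exp (-(lam*K)) := by rw [← exp_add]; ring_nf
  have eb : exp (-(lam*(a-K))) = exp (-(lam*a)) * exp (lam*K) := by rw [← exp_add]; ring_nf
  have ec : exp (lam*(a+K)) = exp (lam*a) * exp (lam*K) := by rw [← exp_add]; ring_nf
  have ed : exp (-(lam*(a+K))) = exp (-(lam*a)) * exp (-(lam*K)) := by rw [← exp_add]; ring_nf
  have ee : exp (lam*(a+tau)) = exp (lam*a) * exp (lam*tau) := by rw [← exp_add]; ring_nf
  have ef : exp (-(lam*(a+tau))) = exp (-(lam*a)) * exp (-(lam*tau)) := by rw [← exp_add]; ring_nf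
  rw [ea, eb, ec, ed, ee, ef]
  have hE1 : (0:ℝ) < exp (lam*a) := exp_pos _
  have hE2 : (0:ℝ) < exp (-(lam*a)) := exp_pos _
  have hA2 := mul_le_mul_of_nonneg_left hA hE1.le
  have hB2 := mul_le_mul_of_nonneg_left hB hE2.le
  rw [div_le_iff₀ h2K]
  nlinarith [hA2, hB2]

lemma lemL {H : Type*} [NormedAddCommGroup H] [InnerProductSpace ℝ H] [CompleteSpace H]
    [SecondCountableTopology H] [MeasurableSpace H] [BorelSpace H]
    (ν : Measure H) [IsProbabilityMeasure ν] {K lam : ℝ} (hK : 0 < K) (hl : 0 ≤ lam)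
    (hb : ∀ᵐ v ∂ν, ‖v‖ ≤ K) (x : H) :
    ∫ v, Real.cosh (lam * ‖x + (v - ∫ w, w ∂ν)‖) ∂ν
      ≤ Real.cosh (lam * ‖x‖) * Real.exp (lam^2 * K^2 / 2) := by
  have hint_id : Integrable (fun v : H => v) ν := by
    refine (integrable_const K).mono' measurable_id.aestronglyMeasurable ?_
    filter_upwards [hb] with v h using h
  set μν : H := ∫ w, w ∂ν with hμν
  have hμK : ‖μν‖ ≤ K := by
    calc ‖μν‖ ≤ ∫ v, ‖v‖ ∂ν := norm_integral_le_integral_norm _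
      _ ≤ ∫ _, K ∂ν := integral_mono_ae hint_id.norm (integrable_const K) hb
      _ = K := by simp
  -- integrand is continuous, hence measurable
  have hcont : Continuous (fun v : H => Real.cosh (lam * ‖x + (v - μν)‖)) := by
    fun_prop
  -- integrand bounded a.e.
  have hbound : ∀ᵐ v ∂ν, ‖Real.cosh (lam * ‖x + (v - μν)‖)‖ ≤ Real.cosh (lam * (‖x‖ + 2*K)) := by
    filter_upwards [hb] with v h
    rw [Real.norm_eq_abs, abs_of_pos (Real.cosh_pos _)]
    rw [Real.cosh_le_cosh]
    have h1 : ‖x + (v - μν)‖ ≤ ‖x‖ + 2*K := by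
      calc ‖x + (v - μν)‖ ≤ ‖x‖ + ‖v - μν‖ := norm_add_le _ _
        _ ≤ ‖x‖ + (‖v‖ + ‖μν‖) := by linarith [norm_sub_le v μν]
        _ ≤ ‖x‖ + 2*K := by linarith
    have h2 : 0 ≤ ‖x + (v - μν)‖ := norm_nonneg _
    rw [abs_of_nonneg (by positivity), abs_of_nonneg (by positivity)]
    exact mul_le_mul_of_nonneg_left h1 hl
  have hint : Integrable (fun v : H => Real.cosh (lam * ‖x + (v - μν)‖)) ν :=
    (integrable_const _).mono' hcont.aestronglyMeasurable hbound
  by_cases hy : x - μν = 0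
  · -- degenerate case : x = μν
    have hx : ∀ v : H, x + (v - μν) = v := by
      intro v
      have : x = μν := by rwa [sub_eq_zero] at hy
      rw [this]; abel
    calc ∫ v, Real.cosh (lam * ‖x + (v - μν)‖) ∂ν
        ≤ ∫ _, Real.exp (lam^2 * K^2 / 2) ∂ν := by
          refine integral_mono_ae hint (integrable_const _) ?_
          filter_upwards [hb] with v h
          rw [hx v]
          calc Real.cosh (lam * ‖v‖) ≤ Real.cosh (lam * K) := by
                rw [Real.cosh_le_cosh, abs_of_nonneg (by positivity),
                  abs_of_nonneg (by positivity)]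
                exact mul_le_mul_of_nonneg_left h hl
            _ ≤ Real.exp ((lam*K)^2/2) := Real.cosh_le_exp_half_sq _
            _ = Real.exp (lam^2*K^2/2) := by ring_nf
      _ = Real.exp (lam^2 * K^2 / 2) := by simp
      _ ≤ Real.cosh (lam * ‖x‖) * Real.exp (lam^2 * K^2 / 2) := by
          nlinarith [Real.one_le_cosh (lam * ‖x‖), Real.exp_pos (lam^2 * K^2 / 2)]
  · -- main case
    set y : H := x - μν with hydef
    set a : ℝ := ‖y‖ with ha
    have ha0 : 0 < a := by rwa [ha, norm_pos_iff]
    set u : H := a⁻¹ • y with hu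
    have hunorm : ‖u‖ = 1 := by
      rw [hu, norm_smul, norm_inv, Real.norm_eq_abs, abs_of_pos ha0, inv_mul_cancel₀ ha0.ne']
    set cm : ℝ := Real.cosh (lam*(a - K)) with hcm
    set cp : ℝ := Real.cosh (lam*(a + K)) with hcp
    set c0 : ℝ := (K * cm + K * cp)/(2*K) with hc0
    set c1 : ℝ := (cp - cm)/(2*K) with hc1
    have haff : ∀ t : ℝ, ((K - t) * cm + (K + t) * cp)/(2*K) = c0 + c1 * t := by
      intro t; rw [hc0, hc1]; field_simp; ring
    have hptwise : ∀ᵐ v ∂ν, Real.cosh (lam * ‖x + (v - μν)‖) ≤ c0 + c1 * ⟪u, v⟫ := by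
      filter_upwards [hb] with v h
      rw [← haff ⟪u, v⟫]
      have hxv : x + (v - μν) = y + v := by rw [hydef]; abel
      have htabs : |⟪u, v⟫| ≤ K := by
        calc |⟪u, v⟫| ≤ ‖u‖ * ‖v‖ := abs_real_inner_le_norm u v
          _ = ‖v‖ := by rw [hunorm, one_mul]
          _ ≤ K := h
      have hyv : ⟪y, v⟫ = a * ⟪u, v⟫ := by
        have : y = a • u := by rw [hu, smul_smul, mul_inv_cancel₀ ha0.ne', one_smul]
        rw [this, real_inner_smul_left]
      have hr2 : ‖y + v‖^2 ≤ a^2 + K^2 + 2*a*⟪u, v⟫ := by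
        rw [norm_add_sq_real, hyv]
        have : ‖v‖^2 ≤ K^2 := by nlinarith [norm_nonneg v]
        rw [← ha]; nlinarith
      rw [hxv]
      exact chord_bound hK hl ha0.le htabs (norm_nonneg _) hr2
    have hint_aff : Integrable (fun v : H => c0 + c1 * ⟪u, v⟫) ν := by
      refine (integrable_const c0).add (((hint_id.const_inner u)).const_mul c1)
    set τ : ℝ := ⟪u, μν⟫ with hτ
    have hτK : |τ| ≤ K := by
      calc |τ| ≤ ‖u‖ * ‖μν‖ := abs_real_inner_le_norm u μν
        _ ≤ K := by rw [hunorm, one_mul]; exact hμK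
    have hint_eq : ∫ v, (c0 + c1 * ⟪u, v⟫) ∂ν = c0 + c1 * τ := by
      rw [integral_add (integrable_const c0) ((hint_id.const_inner u).const_mul c1),
        integral_const, integral_const_mul, integral_inner hint_id]
      simp [hτ, hμν]
    have hfinal : c0 + c1 * τ ≤ Real.cosh (lam * ‖x‖) * Real.exp (lam^2 * K^2 / 2) := by
      rw [← haff τ]
      calc ((K - τ) * cm + (K + τ) * cp)/(2*K)
          ≤ Real.cosh (lam*(a + τ)) * exp (lam^2 * K^2 / 2) := star_bound hK hl hτK
        _ ≤ Real.cosh (lam * ‖x‖) * exp (lam^2 * K^2 / 2) := by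
            refine mul_le_mul_of_nonneg_right ?_ (exp_pos _).le
            rw [Real.cosh_le_cosh]
            have hx_eq : x = y + μν := by rw [hydef]; abel
            have hinner : ⟪y, x⟫ = a * (a + τ) := by
              rw [hx_eq, inner_add_right, real_inner_self_eq_norm_sq, ← ha]
              have hyμ : ⟪y, μν⟫ = a * τ := by
                have : y = a • u := by rw [hu, smul_smul, mul_inv_cancel₀ ha0.ne', one_smul]
                rw [this, real_inner_smul_left, hτ]
              rw [hyμ]; ring
            have habs : |a + τ| ≤ ‖x‖ := by
              have h1 : |⟪y, x⟫| ≤ a * ‖x‖ := by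
                calc |⟪y, x⟫| ≤ ‖y‖ * ‖x‖ := abs_real_inner_le_norm y x
                  _ = a * ‖x‖ := by rw [← ha]
              rw [hinner, abs_mul, abs_of_pos ha0] at h1
              exact le_of_mul_le_mul_left h1 ha0
            calc |lam * (a + τ)| = lam * |a + τ| := by
                  rw [abs_mul, abs_of_nonneg hl]
              _ ≤ lam * ‖x‖ := mul_le_mul_of_nonneg_left habs hl
              _ ≤ |lam * ‖x‖| := le_abs_self _
    calc ∫ v, Real.cosh (lam * ‖x + (v - μν)‖) ∂ν
        ≤ ∫ v, (c0 + c1 * ⟪u, v⟫) ∂ν := integral_mono_ae hint hint_aff hptwise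
      _ = c0 + c1 * τ := hint_eq
      _ ≤ _ := hfinal

theorem stmt_12 {Ω H : Type*} [MeasurableSpace Ω]
    [NormedAddCommGroup H] [InnerProductSpace ℝ H] [CompleteSpace H]
    [SecondCountableTopology H] [MeasurableSpace H] [BorelSpace H]
    (P : Measure Ω) [IsProbabilityMeasure P]
    (n : ℕ) (hn : 0 < n) (X : ℕ → Ω → H)
    (hmeas : ∀ j, Measurable (X j))
    (hindep : iIndepFun X P)
    (hident : ∀ j, Measure.map (X j) P = Measure.map (X 0) P)
    (K : ℝ) (hK : 0 < K)
    (hbdd : ∀ j, ∀ᵐ ω ∂P, ‖X j ω‖ ≤ K)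
    (ε : ℝ) (hε : 0 < ε) :
    P {ω | ε < ‖(n : ℝ)⁻¹ • ∑ j ∈ Finset.range n, X j ω - ∫ ω', X 0 ω' ∂P‖} ≤
      ENNReal.ofReal (2 * Real.exp (-(n : ℝ) * ε ^ 2 / (2 * K ^ 2))) := by
  classical
  set lam : ℝ := ε / K^2 with hlam
  have hlam0 : 0 < lam := by positivity
  set μ : H := ∫ ω', X 0 ω' ∂P with hμ
  set ν : Measure H := Measure.map (X 0) P with hν
  haveI hprobν : IsProbabilityMeasure ν := Measure.isProbabilityMeasure_map (hmeas 0).aemeasurable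
  have hbν : ∀ᵐ v ∂ν, ‖v‖ ≤ K := by
    rw [hν, ae_map_iff (hmeas 0).aemeasurable
      (measurableSet_le (measurable_norm) measurable_const)]
    exact hbdd 0
  have hmean : ∫ w, w ∂ν = μ := by
    have h := integral_map (φ := X 0) (μ := P) (hmeas 0).aemeasurable
      (f := fun w : H => w) aestronglyMeasurable_id
    rw [hν]
    exact h
  have hμK : ‖μ‖ ≤ K := by
    have : ‖∫ w, w ∂ν‖ ≤ K := by
      calc ‖∫ w, w ∂ν‖ ≤ ∫ w, ‖w‖ ∂ν := norm_integral_le_integral_norm _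
        _ ≤ ∫ _, K ∂ν := by
            refine integral_mono_ae ?_ (integrable_const K) hbν
            refine (integrable_const K).mono' measurable_norm.aestronglyMeasurable ?_
            filter_upwards [hbν] with v h using by simpa using h
        _ = K := by simp
    rwa [hmean] at this
  -- partial centered sums
  set S : ℕ → Ω → H := fun k ω => (∑ j ∈ Finset.range k, X j ω) - (k : ℝ) • μ with hS
  have hSmeas : ∀ k, Measurable (S k) := by
    intro k
    exact (Finset.measurable_sum _ (fun j _ => hmeas j)).sub measurable_const
  have hSbdd : ∀ k, ∀ᵐ ω ∂P, ‖S k ω‖ ≤ 2 * k * K := by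
    intro k
    have hall : ∀ᵐ ω ∂P, ∀ j, ‖X j ω‖ ≤ K := ae_all_iff.mpr hbdd
    filter_upwards [hall] with ω h
    have h1 : ‖∑ j ∈ Finset.range k, X j ω‖ ≤ (k:ℝ) * K := by
      calc ‖∑ j ∈ Finset.range k, X j ω‖ ≤ ∑ j ∈ Finset.range k, ‖X j ω‖ :=
            norm_sum_le _ _
        _ ≤ ∑ _j ∈ Finset.range k, K := Finset.sum_le_sum (fun j _ => h j)
        _ = (k:ℝ) * K := by rw [Finset.sum_const, Finset.card_range, nsmul_eq_mul]
    have h2 : ‖(k : ℝ) • μ‖ ≤ (k:ℝ) * K := by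
      rw [norm_smul, Real.norm_natCast]
      exact mul_le_mul_of_nonneg_left hμK (Nat.cast_nonneg k)
    calc ‖S k ω‖ ≤ ‖∑ j ∈ Finset.range k, X j ω‖ + ‖(k : ℝ) • μ‖ := norm_sub_le _ _
      _ ≤ 2 * k * K := by linarith
  -- integrability of cosh of norms of S k
  have hcoshcont : ∀ k : ℕ, Continuous (fun s : H => Real.cosh (lam * ‖s‖)) := by
    intro k; fun_prop
  have hScosh_int : ∀ k, Integrable (fun ω => Real.cosh (lam * ‖S k ω‖)) P := by
    intro k
    refine (integrable_const (Real.cosh (lam * (2*k*K)))).mono'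
      (((hcoshcont k).measurable.comp (hSmeas k)).aestronglyMeasurable) ?_
    filter_upwards [hSbdd k] with ω h
    rw [Real.norm_eq_abs, abs_of_pos (Real.cosh_pos _), Real.cosh_le_cosh,
      abs_of_nonneg (by positivity), abs_of_nonneg (by positivity)]
    exact mul_le_mul_of_nonneg_left h hlam0.le
  set c : ℝ := lam^2 * K^2 / 2 with hc
  have hSae : ∀ k : ℕ, ∀ᵐ s ∂(P.map (S k)), ‖s‖ ≤ 2*k*K := by
    intro k
    rw [ae_map_iff (hSmeas k).aemeasurable
      (measurableSet_le measurable_norm measurable_const)]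
    exact hSbdd k
  have key : ∀ k : ℕ, ∫ ω, Real.cosh (lam * ‖S k ω‖) ∂P ≤ Real.exp (k * c) := by
    intro k
    induction k with
    | zero =>
      have h0 : ∀ ω, S 0 ω = 0 := by
        intro ω; simp [hS]
      simp only [h0, Nat.cast_zero, zero_mul, Real.exp_zero, norm_zero, mul_zero,
        Real.cosh_zero, integral_const, measure_univ, ENNReal.toReal_one, smul_eq_mul, one_mul]
      simp
    | succ k ih =>
      have hsucc : ∀ ω, S (k+1) ω = S k ω + (X k ω - μ) := by
        intro ω
        simp only [hS, Finset.sum_range_succ, Nat.cast_succ, add_smul, one_smul]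
        abel
      have hIndepSum : IndepFun (∑ j ∈ Finset.range k, X j) (X k) P :=
        hindep.indepFun_sum_range_succ hmeas k
      have hIndep : IndepFun (S k) (X k) P := by
        have hcomp := hIndepSum.comp (φ := fun s : H => s - (k:ℝ) • μ) (ψ := id)
          (measurable_id.sub_const _) measurable_id
        have heq : (fun s : H => s - (k:ℝ) • μ) ∘ (∑ j ∈ Finset.range k, X j) = S k := by
          funext ω
          simp [hS, Function.comp, Finset.sum_apply]
        rwa [heq] at hcomp
      have hpair_meas : Measurable (fun ω => (S k ω, X k ω)) := (hSmeas k).prodMk (hmeas k)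
      have hmap_pair : P.map (fun ω => (S k ω, X k ω))
          = (P.map (S k)).prod (P.map (X k)) :=
        (indepFun_iff_map_prod_eq_prod_map_map (hSmeas k).aemeasurable
          (hmeas k).aemeasurable).mp hIndep
      set ρ : Measure H := P.map (S k) with hρ
      haveI : IsProbabilityMeasure ρ := Measure.isProbabilityMeasure_map (hSmeas k).aemeasurable
      set g : H × H → ℝ := fun z => Real.cosh (lam * ‖z.1 + (z.2 - μ)‖) with hg
      have hgcont : Continuous g := by
        rw [hg]; fun_prop
      -- a.e. bound on the product measure
      have hae_prod : ∀ᵐ z ∂(ρ.prod ν), ‖z.1‖ ≤ 2*k*K ∧ ‖z.2‖ ≤ K := by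
        rw [ae_iff]
        have hsubset : {z : H × H | ¬(‖z.1‖ ≤ 2*k*K ∧ ‖z.2‖ ≤ K)}
            ⊆ ({s : H | ¬ ‖s‖ ≤ 2*k*K} ×ˢ (Set.univ : Set H))
              ∪ ((Set.univ : Set H) ×ˢ {v : H | ¬ ‖v‖ ≤ K}) := by
          intro z hz
          simp only [Set.mem_setOf_eq, not_and_or] at hz
          rcases hz with h | h
          · left; exact ⟨h, Set.mem_univ _⟩
          · right; exact ⟨Set.mem_univ _, h⟩
        refine measure_mono_null hsubset (measure_union_null ?_ ?_)
        · rw [Measure.prod_prod]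
          have : ρ {s : H | ¬ ‖s‖ ≤ 2*k*K} = 0 := by
            have h := hSae k; rw [ae_iff] at h; exact h
          rw [this, zero_mul]
        · rw [Measure.prod_prod]
          have : ν {v : H | ¬ ‖v‖ ≤ K} = 0 := by
            have h := hbν; rw [ae_iff] at h; exact h
          rw [this, mul_zero]
      have hgint : Integrable g (ρ.prod ν) := by
        refine (integrable_const (Real.cosh (lam * (2*k*K + 2*K)))).mono'
          hgcont.aestronglyMeasurable ?_
        filter_upwards [hae_prod] with z hz
        rw [Real.norm_eq_abs, abs_of_pos (Real.cosh_pos _), Real.cosh_le_cosh,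
          abs_of_nonneg (by positivity), abs_of_nonneg (by positivity)]
        refine mul_le_mul_of_nonneg_left ?_ hlam0.le
        calc ‖z.1 + (z.2 - μ)‖ ≤ ‖z.1‖ + ‖z.2 - μ‖ := norm_add_le _ _
          _ ≤ ‖z.1‖ + (‖z.2‖ + ‖μ‖) := by linarith [norm_sub_le z.2 μ]
          _ ≤ 2*k*K + 2*K := by
              have := hz.1; have := hz.2; linarith
      -- rewrite the integral
      have hrw1 : ∫ ω, Real.cosh (lam * ‖S (k+1) ω‖) ∂P = ∫ ω, g (S k ω, X k ω) ∂P := by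
        congr 1
        funext ω
        rw [hsucc ω]
      have hrw2 : ∫ ω, g (S k ω, X k ω) ∂P = ∫ z, g z ∂(ρ.prod ν) := by
        rw [← integral_map hpair_meas.aemeasurable hgcont.aestronglyMeasurable,
          hmap_pair, hident k]
      have hρcosh_int : Integrable (fun s : H => Real.cosh (lam * ‖s‖)) ρ := by
        refine (integrable_const (Real.cosh (lam * (2*k*K)))).mono'
          ((hcoshcont k).measurable.aestronglyMeasurable) ?_
        filter_upwards [hSae k] with s h
        rw [Real.norm_eq_abs, abs_of_pos (Real.cosh_pos _), Real.cosh_le_cosh,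
          abs_of_nonneg (by positivity), abs_of_nonneg (by positivity)]
        exact mul_le_mul_of_nonneg_left h hlam0.le
      have hinner : ∀ s : H, ∫ v, g (s, v) ∂ν ≤ Real.cosh (lam * ‖s‖) * Real.exp c := by
        intro s
        have h := lemL ν hK hlam0.le hbν s
        rw [hmean] at h
        exact h
      calc ∫ ω, Real.cosh (lam * ‖S (k+1) ω‖) ∂P
          = ∫ z, g z ∂(ρ.prod ν) := by rw [hrw1, hrw2]
        _ = ∫ s, ∫ v, g (s, v) ∂ν ∂ρ := integral_prod g hgint
        _ ≤ ∫ s, Real.cosh (lam * ‖s‖) * Real.exp c ∂ρ := by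
            refine integral_mono_ae hgint.integral_prod_left
              (hρcosh_int.mul_const _) ?_
            exact Filter.Eventually.of_forall hinner
        _ = (∫ s, Real.cosh (lam * ‖s‖) ∂ρ) * Real.exp c := integral_mul_const _ _
        _ = (∫ ω, Real.cosh (lam * ‖S k ω‖) ∂P) * Real.exp c := by
            rw [hρ, integral_map (hSmeas k).aemeasurable
              ((hcoshcont k).aestronglyMeasurable)]
        _ ≤ Real.exp (k * c) * Real.exp c := by
            refine mul_le_mul_of_nonneg_right ih (Real.exp_pos c).le
        _ = Real.exp ((k+1 : ℕ) * c) := by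
            rw [← Real.exp_add]
            congr 1
            push_cast
            ring
  -- Chernoff step
  set Z : Ω → ℝ := fun ω => Real.cosh (lam * ‖S n ω‖) with hZ
  have hZint : Integrable Z P := hScosh_int n
  have hZnonneg : 0 ≤ᵐ[P] Z := Filter.Eventually.of_forall (fun ω => (Real.cosh_pos _).le)
  have hmarkov := mul_meas_ge_le_integral_of_nonneg hZnonneg hZint
    (Real.cosh (lam * ((n:ℝ)*ε)))
  have hn0 : (0:ℝ) < n := Nat.cast_pos.mpr hn
  have hsub : {ω | ε < ‖(n : ℝ)⁻¹ • ∑ j ∈ Finset.range n, X j ω - μ‖}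
      ⊆ {ω | Real.cosh (lam * ((n:ℝ)*ε)) ≤ Z ω} := by
    intro ω hω
    simp only [Set.mem_setOf_eq] at hω ⊢
    have hrwω : (n : ℝ)⁻¹ • ∑ j ∈ Finset.range n, X j ω - μ = (n:ℝ)⁻¹ • S n ω := by
      simp only [hS]
      rw [smul_sub, smul_smul, inv_mul_cancel₀ hn0.ne', one_smul]
    rw [hrwω, norm_smul, norm_inv, Real.norm_natCast] at hω
    have hlt : (n:ℝ) * ε < ‖S n ω‖ := by
      rw [inv_mul_eq_div] at hω
      exact (lt_div_iff₀' hn0).mp hω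
    rw [hZ, Real.cosh_le_cosh, abs_of_nonneg (by positivity),
      abs_of_nonneg (by positivity)]
    exact mul_le_mul_of_nonneg_left hlt.le hlam0.le
  have hcoshpos : 0 < Real.cosh (lam * ((n:ℝ)*ε)) := Real.cosh_pos _
  set A := {ω | ε < ‖(n : ℝ)⁻¹ • ∑ j ∈ Finset.range n, X j ω - μ‖} with hA
  have hPle : (P A).toReal ≤ (P {ω | Real.cosh (lam * ((n:ℝ)*ε)) ≤ Z ω}).toReal :=
    ENNReal.toReal_mono (measure_ne_top _ _) (measure_mono hsub)
  have hmark2 : (P {ω | Real.cosh (lam * ((n:ℝ)*ε)) ≤ Z ω}).toReal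
      ≤ Real.exp ((n:ℝ) * c) / Real.cosh (lam * ((n:ℝ)*ε)) := by
    rw [le_div_iff₀ hcoshpos]
    calc (P {ω | Real.cosh (lam * ((n:ℝ)*ε)) ≤ Z ω}).toReal * Real.cosh (lam * ((n:ℝ)*ε))
        = Real.cosh (lam * ((n:ℝ)*ε)) * (P {ω | Real.cosh (lam * ((n:ℝ)*ε)) ≤ Z ω}).toReal := by
          ring
      _ ≤ ∫ ω, Z ω ∂P := hmarkov
      _ ≤ Real.exp ((n:ℝ) * c) := key n
  have hcosh_ge : Real.exp (lam*((n:ℝ)*ε))/2 ≤ Real.cosh (lam*((n:ℝ)*ε)) := by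
    rw [Real.cosh_eq]
    have := Real.exp_pos (-(lam*((n:ℝ)*ε)))
    linarith
  have hfinal_real : Real.exp ((n:ℝ)*c) / Real.cosh (lam*((n:ℝ)*ε))
      ≤ 2 * Real.exp (-(n:ℝ) * ε^2/(2*K^2)) := by
    have h1 : Real.exp ((n:ℝ)*c)/Real.cosh (lam*((n:ℝ)*ε))
        ≤ Real.exp ((n:ℝ)*c)/(Real.exp (lam*((n:ℝ)*ε))/2) :=
      div_le_div_of_nonneg_left (Real.exp_pos _).le (by positivity) hcosh_ge
    have h2 : Real.exp ((n:ℝ)*c)/(Real.exp (lam*((n:ℝ)*ε))/2)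
        = 2 * Real.exp ((n:ℝ)*c - lam*((n:ℝ)*ε)) := by
      rw [Real.exp_sub]
      field_simp
    have h3 : (n:ℝ)*c - lam*((n:ℝ)*ε) = -(n:ℝ) * ε^2/(2*K^2) := by
      rw [hc, hlam]
      field_simp
      ring
    rw [h2, h3] at h1
    exact h1
  calc P A = ENNReal.ofReal ((P A).toReal) :=
        (ENNReal.ofReal_toReal (measure_ne_top _ _)).symm
    _ ≤ ENNReal.ofReal (2 * Real.exp (-(n:ℝ) * ε^2/(2*K^2))) := by
        apply ENNReal.ofReal_le_ofReal
        calc (P A).toReal ≤ _ := hPle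
          _ ≤ _ := hmark2
          _ ≤ _ := hfinal_real
    _ = ENNReal.ofReal (2 * Real.exp (-(n:ℝ) * ε^2 / (2*K^2))) := rfl
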